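/- If π ∈ S_n has π_1 = i and π' is the reduction to {1,...,n−1} of the beheaded permutation π_2...π_n, then with weight(π) := q^{N_{[1,2,3]}(π)} · Π x_i^{c_i(π)} (where c_i(π) counts pairs a<b with π_a = i < π_b), one has weight(π) = x_i^{n-i} · weight(π') under the substitution x_j → q·x_{j+1} for j = i,...,n−1 applied to weight(π'). -/

import Mathlib

open Finset

/-- Number of occurrences of the increasing pattern [1,2,3] in `π`. -/
def N3 {n : ℕ} (π : Equiv.Perm (Fin n)) : ℕ :=
  (Finset.univ.filter fun t : Fin n × Fin n × Fin n =>
    t.1 < t.2.1 ∧ t.2.1 < t.2.2 ∧ π t.1 < π t.2.1 ∧ π t.2.1 < π t.2.2).card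

/-- `c π i` = number of pairs a < b with π(a) = i < π(b). -/
def c {n : ℕ} (π : Equiv.Perm (Fin n)) (i : Fin n) : ℕ :=
  (Finset.univ.filter fun p : Fin n × Fin n => p.1 < p.2 ∧ π p.1 = i ∧ i < π p.2).card

lemma card_filter_lt_apply {n : ℕ} (σ : Equiv.Perm (Fin (n+1))) (t : Fin (n+1)) :
    ((univ : Finset (Fin (n+1))).filter fun b => t < σ b).card = n - (t : ℕ) := by
  have : ((univ : Finset (Fin (n+1))).filter fun b => t < σ b).card = (Ioi t).card := by
    apply Finset.card_bij (fun b _ => σ b)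
    · intro b hb
      simp only [mem_filter] at hb
      simpa [Finset.mem_Ioi] using hb.2
    · intro a _ b _ h
      exact σ.injective h
    · intro w hw
      refine ⟨σ.symm w, ?_, by simp⟩
      simp only [mem_filter, mem_univ, true_and, Equiv.apply_symm_apply]
      exact Finset.mem_Ioi.mp hw
  rw [this, Fin.card_Ioi]
  omega

lemma cA {n : ℕ} (π : Equiv.Perm (Fin (n+1))) :
    c π (π 0) = n - ((π 0 : Fin (n+1)) : ℕ) := by
  rw [← card_filter_lt_apply π (π 0)]
  apply Finset.card_bij (fun p _ => p.2)
  · intro p hp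
    simp only [mem_filter, mem_univ, true_and] at hp ⊢
    exact hp.2.2
  · intro p hp p' hp' h
    simp only [mem_filter, mem_univ, true_and] at hp hp'
    have h1 : p.1 = p'.1 := π.injective (hp.2.1.trans hp'.2.1.symm)
    exact Prod.ext h1 h
  · intro b hb
    rw [mem_filter] at hb
    have hb' : π 0 < π b := hb.2
    have hb0 : b ≠ 0 := fun h => by subst h; exact lt_irrefl _ hb'
    refine ⟨(0, b), ?_, rfl⟩
    rw [mem_filter]
    exact ⟨mem_univ _, Fin.pos_of_ne_zero hb0, rfl, hb'⟩

lemma lt_succAbove_iff' {n : ℕ} (i : Fin (n+1)) (j : Fin n) :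
    i < i.succAbove j ↔ (i : ℕ) ≤ (j : ℕ) := by
  rcases lt_or_ge (j : ℕ) (i : ℕ) with h | h
  · rw [Fin.succAbove_of_castSucc_lt _ _ (by rw [Fin.lt_def, Fin.coe_castSucc]; omega)]
    rw [Fin.lt_def, Fin.coe_castSucc]
    omega
  · rw [Fin.succAbove_of_le_castSucc _ _ (by rw [Fin.le_def, Fin.coe_castSucc]; omega)]
    rw [Fin.lt_def, Fin.val_succ]
    omega

lemma cB {n : ℕ} (π : Equiv.Perm (Fin (n+1))) (π' : Equiv.Perm (Fin n))
    (hkey : ∀ a : Fin n, π a.succ = (π 0).succAbove (π' a)) (j : Fin n) :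
    c π ((π 0).succAbove j) = c π' j := by
  unfold c
  symm
  apply Finset.card_bij (fun p _ => (p.1.succ, p.2.succ))
  · intro p hp
    rw [mem_filter] at hp ⊢
    obtain ⟨-, h1, h2, h3⟩ := hp
    refine ⟨mem_univ _, Fin.succ_lt_succ_iff.mpr h1, ?_, ?_⟩
    · rw [hkey]; exact congrArg _ h2
    · rw [hkey]; exact Fin.succAbove_lt_succAbove_iff.mpr h3
  · intro p _ p' _ h
    exact Prod.ext (Fin.succ_injective _ (congrArg Prod.fst h))
      (Fin.succ_injective _ (congrArg Prod.snd h))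
  · intro p hp
    rw [mem_filter] at hp
    obtain ⟨-, h1, h2, h3⟩ := hp
    have hs : (π 0).succAbove j ≠ π 0 := Fin.succAbove_ne _ _
    have ha0 : p.1 ≠ 0 := fun h => hs (by rw [← h2, h])
    have hb0 : p.2 ≠ 0 := fun h => Fin.not_lt_zero p.1 (h ▸ h1)
    obtain ⟨a, ha⟩ := Fin.exists_succ_eq.mpr ha0
    obtain ⟨b, hb⟩ := Fin.exists_succ_eq.mpr hb0
    refine ⟨(a, b), ?_, by rw [Prod.ext_iff]; exact ⟨ha, hb⟩⟩
    rw [mem_filter]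
    refine ⟨mem_univ _, ?_, ?_, ?_⟩
    · rw [← Fin.succ_lt_succ_iff, ha, hb]; exact h1
    · have hk := hkey a
      rw [ha, h2] at hk
      exact Fin.succAbove_right_injective hk.symm
    · rw [← Fin.succAbove_lt_succAbove_iff (p := π 0), ← hkey, hb]
      exact h3

lemma cC {n : ℕ} (π : Equiv.Perm (Fin (n+1))) (π' : Equiv.Perm (Fin n))
    (hred : ∀ a b : Fin n, π' a < π' b ↔ π a.succ < π b.succ)
    (hkey : ∀ a : Fin n, π a.succ = (π 0).succAbove (π' a)) :
    N3 π = N3 π' +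
      ∑ j ∈ univ.filter (fun j : Fin n => ¬ (j:ℕ) < ((π 0 : Fin (n+1)):ℕ)), c π' j := by
  classical
  set T := (Finset.univ.filter fun t : Fin (n+1) × Fin (n+1) × Fin (n+1) =>
    t.1 < t.2.1 ∧ t.2.1 < t.2.2 ∧ π t.1 < π t.2.1 ∧ π t.2.1 < π t.2.2) with hT
  have hsplit : N3 π = (T.filter fun t => t.1 ≠ 0).card + (T.filter fun t => t.1 = 0).card := by
    rw [N3, ← hT, ← Finset.card_filter_add_card_filter_not (p := fun t => t.1 ≠ 0)]
    simp
  have hpart2 : (T.filter fun t => t.1 ≠ 0).card = N3 π' := by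
    rw [N3]
    symm
    apply Finset.card_bij (fun t _ => (t.1.succ, t.2.1.succ, t.2.2.succ))
    · intro t ht
      rw [mem_filter] at ht
      obtain ⟨-, h1, h2, h3, h4⟩ := ht
      rw [mem_filter, hT, mem_filter]
      exact ⟨⟨mem_univ _, Fin.succ_lt_succ_iff.mpr h1, Fin.succ_lt_succ_iff.mpr h2,
        (hred _ _).mp h3, (hred _ _).mp h4⟩, Fin.succ_ne_zero _⟩
    · intro t _ t' _ h
      rw [Prod.ext_iff, Prod.ext_iff] at h
      exact Prod.ext (Fin.succ_injective _ h.1)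
        (Prod.ext (Fin.succ_injective _ h.2.1) (Fin.succ_injective _ h.2.2))
    · intro t ht
      rw [mem_filter, hT, mem_filter] at ht
      obtain ⟨⟨-, h1, h2, h3, h4⟩, h0⟩ := ht
      have hb0 : t.2.1 ≠ 0 := fun h => Fin.not_lt_zero t.1 (h ▸ h1)
      have hc0 : t.2.2 ≠ 0 := fun h => Fin.not_lt_zero t.2.1 (h ▸ h2)
      obtain ⟨a, ha⟩ := Fin.exists_succ_eq.mpr h0
      obtain ⟨b, hb⟩ := Fin.exists_succ_eq.mpr hb0
      obtain ⟨cc, hc⟩ := Fin.exists_succ_eq.mpr hc0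
      refine ⟨(a, b, cc), ?_, by rw [Prod.ext_iff, Prod.ext_iff]; exact ⟨ha, hb, hc⟩⟩
      rw [mem_filter]
      refine ⟨mem_univ _, ?_, ?_, ?_, ?_⟩
      · rw [← Fin.succ_lt_succ_iff, ha, hb]; exact h1
      · rw [← Fin.succ_lt_succ_iff, hb, hc]; exact h2
      · rw [hred, ha, hb]; exact h3
      · rw [hred, hb, hc]; exact h4
  have hpart1 : (T.filter fun t => t.1 = 0).card =
      ∑ j ∈ univ.filter (fun j : Fin n => ¬ (j:ℕ) < ((π 0 : Fin (n+1)):ℕ)), c π' j := by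
    set P := (Finset.univ.filter fun p : Fin n × Fin n =>
      p.1 < p.2 ∧ ((π 0 : Fin (n+1)):ℕ) ≤ (π' p.1 : ℕ) ∧ π' p.1 < π' p.2) with hP
    have step1 : (T.filter fun t => t.1 = 0).card = P.card := by
      symm
      apply Finset.card_bij (fun p _ => ((0 : Fin (n+1)), p.1.succ, p.2.succ))
      · intro p hp
        rw [hP, mem_filter] at hp
        obtain ⟨-, h1, h2, h3⟩ := hp
        rw [mem_filter, hT, mem_filter]
        refine ⟨⟨mem_univ _, Fin.succ_pos _, Fin.succ_lt_succ_iff.mpr h1, ?_, (hred _ _).mp h3⟩,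
          rfl⟩
        rw [hkey]
        exact (lt_succAbove_iff' _ _).mpr h2
      · intro p _ p' _ h
        rw [Prod.ext_iff, Prod.ext_iff] at h
        exact Prod.ext (Fin.succ_injective _ h.2.1) (Fin.succ_injective _ h.2.2)
      · intro t ht
        rw [mem_filter, hT, mem_filter] at ht
        obtain ⟨⟨-, h1, h2, h3, h4⟩, h0⟩ := ht
        have hb0 : t.2.1 ≠ 0 := fun h => by rw [h0, h] at h1; exact lt_irrefl _ h1
        have hc0 : t.2.2 ≠ 0 := fun h => Fin.not_lt_zero t.2.1 (h ▸ h2)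
        obtain ⟨b, hb⟩ := Fin.exists_succ_eq.mpr hb0
        obtain ⟨cc, hc⟩ := Fin.exists_succ_eq.mpr hc0
        refine ⟨(b, cc), ?_, by rw [Prod.ext_iff, Prod.ext_iff]; exact ⟨h0.symm, hb, hc⟩⟩
        rw [hP, mem_filter]
        refine ⟨mem_univ _, ?_, ?_, ?_⟩
        · rw [← Fin.succ_lt_succ_iff, hb, hc]; exact h2
        · rw [← lt_succAbove_iff', ← hkey, hb]
          rw [h0] at h3
          exact h3
        · rw [hred, hb, hc]; exact h4
    rw [step1]
    rw [Finset.card_eq_sum_card_fiberwise (f := fun p => π' p.1)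
      (t := univ.filter (fun j : Fin n => ¬ (j:ℕ) < ((π 0 : Fin (n+1)):ℕ)))]
    · apply Finset.sum_congr rfl
      intro j hj
      rw [mem_filter] at hj
      have hij : ((π 0 : Fin (n+1)):ℕ) ≤ (j : ℕ) := by omega
      rw [c]
      congr 1
      ext p
      rw [Finset.mem_filter, hP, Finset.mem_filter, Finset.mem_filter]
      constructor
      · rintro ⟨⟨-, h1, h2, h3⟩, h4⟩
        exact ⟨mem_univ _, h1, h4, h4 ▸ h3⟩
      · rintro ⟨-, h1, h2, h3⟩
        exact ⟨⟨mem_univ _, h1, h2 ▸ hij, h2 ▸ h3⟩, h2⟩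
    · intro p hp
      rw [hP, Finset.mem_coe, mem_filter] at hp
      rw [Finset.mem_coe, mem_filter]
      beta_reduce
      exact ⟨mem_univ _, by omega⟩
  rw [hsplit, hpart2, hpart1]


lemma card_filter_apply_lt {n : ℕ} (σ : Equiv.Perm (Fin n)) (t : Fin n) :
    ((univ : Finset (Fin n)).filter fun b => σ b < t).card = (t : ℕ) := by
  rw [← Fin.card_Iio t]
  apply Finset.card_bij (fun b _ => σ b)
  · intro b hb
    simp only [mem_filter] at hb
    simpa [Finset.mem_Iio] using hb.2
  · intro a _ b _ h
    exact σ.injective h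
  · intro w hw
    refine ⟨σ.symm w, ?_, by simp⟩
    simp only [mem_filter, mem_univ, true_and, Equiv.apply_symm_apply]
    exact Finset.mem_Iio.mp hw

lemma behead_val {n : ℕ} (π : Equiv.Perm (Fin (n+1))) (π' : Equiv.Perm (Fin n))
    (hred : ∀ a b : Fin n, π' a < π' b ↔ π a.succ < π b.succ) (a : Fin n) :
    π a.succ = (π 0).succAbove (π' a) := by
  set i := π 0 with hi
  set v := π a.succ with hv
  have hvi : v ≠ i := fun h => Fin.succ_ne_zero a (π.injective h)
  have h1 : ((univ : Finset (Fin n)).filter fun b => π' b < π' a).card = (π' a : ℕ) :=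
    card_filter_apply_lt π' (π' a)
  have h2 : ((univ : Finset (Fin n)).filter fun b => π' b < π' a)
      = (univ.filter fun b => π b.succ < v) := by
    apply Finset.filter_congr
    intro b _
    simpa using hred b a
  have h3 : ((univ : Finset (Fin n)).filter fun b => π b.succ < v).card
      = ((univ : Finset (Fin (n+1))).filter fun w => w < v ∧ w ≠ i).card := by
    apply Finset.card_bij (fun b _ => π b.succ)
    · intro b hb
      simp only [mem_filter, mem_univ, true_and] at hb ⊢
      refine ⟨hb, fun h => Fin.succ_ne_zero b (π.injective (h.trans hi))⟩
    · intro b₁ _ b₂ _ h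
      exact Fin.succ_injective _ (π.injective h)
    · intro w hw
      simp only [mem_filter, mem_univ, true_and] at hw
      have hm : π.symm w ≠ 0 := by
        intro h
        apply hw.2
        rw [← π.apply_symm_apply w, h, hi]
      obtain ⟨b, hb⟩ := Fin.exists_succ_eq.mpr hm
      refine ⟨b, ?_, by rw [hb]; simp⟩
      simp only [mem_filter, mem_univ, true_and, hb]
      simpa using hw.1
  have h4 : ((univ : Finset (Fin (n+1))).filter fun w => w < v ∧ w ≠ i).card
      = if (i:ℕ) < (v:ℕ) then (v:ℕ) - 1 else (v:ℕ) := by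
    have hIio : ((univ : Finset (Fin (n+1))).filter fun w => w < v ∧ w ≠ i)
        = Iio v \ {i} := by
      ext w
      simp [Finset.mem_Iio, and_comm]
    rw [hIio]
    rcases lt_or_ge (i:ℕ) (v:ℕ) with h | h
    · rw [Finset.card_sdiff_of_subset (by
        simp only [Finset.singleton_subset_iff, Finset.mem_Iio, Fin.lt_def]; omega),
        Fin.card_Iio, Finset.card_singleton]
      rw [if_pos h]
    · have hni : i ∉ Iio v := by
        simp only [Finset.mem_Iio, Fin.lt_def]; omega
      rw [Finset.sdiff_singleton_eq_erase, Finset.erase_eq_of_notMem hni, Fin.card_Iio,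
        if_neg (by omega)]
  have hval : (π' a : ℕ) = if (i:ℕ) < (v:ℕ) then (v:ℕ) - 1 else (v:ℕ) := by
    rw [← h1, h2, h3, h4]
  have hne : (i:ℕ) ≠ (v:ℕ) := fun h => hvi (Fin.ext h.symm)
  have hv0 : v = π a.succ := hv
  apply Fin.ext
  rcases lt_or_ge (i:ℕ) (v:ℕ) with h | h
  · have hv1 : (π' a : ℕ) = (v:ℕ) - 1 := by rw [hval, if_pos h]
    rw [Fin.succAbove_of_le_castSucc _ _ (by rw [Fin.le_def, Fin.coe_castSucc]; omega),
      Fin.val_succ]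
    omega
  · have hlt : (v:ℕ) < (i:ℕ) := by omega
    have hv1 : (π' a : ℕ) = (v:ℕ) := by rw [hval, if_neg (by omega)]
    rw [Fin.succAbove_of_castSucc_lt _ _ (by rw [Fin.lt_def, Fin.coe_castSucc]; omega),
      Fin.coe_castSucc, hv1]

/-- If `π'` is the reduction of the beheaded permutation of `π`, then
`weight(π) = x_i^{n-i} · weight(π')` under the substitution `x_j → q·x_{j+1}` for `j ≥ i`. -/
theorem weight_behead_reduction (n : ℕ) (q : ℝ) (x : Fin (n + 1) → ℝ)
    (π : Equiv.Perm (Fin (n + 1))) (π' : Equiv.Perm (Fin n))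
    (hred : ∀ a b : Fin n, π' a < π' b ↔ π a.succ < π b.succ) :
    q ^ N3 π * ∏ j, x j ^ c π j =
      x (π 0) ^ (n - ((π 0 : Fin (n + 1)) : ℕ)) *
        (q ^ N3 π' * ∏ j : Fin n,
          (if (j : ℕ) < ((π 0 : Fin (n + 1)) : ℕ) then x j.castSucc else q * x j.succ) ^
            c π' j) := by
  have hkey : ∀ a : Fin n, π a.succ = (π 0).succAbove (π' a) := behead_val π π' hred
  set i := π 0 with hi
  set S := ∑ j ∈ univ.filter (fun j : Fin n => ¬ (j:ℕ) < ((i : Fin (n+1)):ℕ)), c π' j with hS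
  have hN : N3 π = N3 π' + S := cC π π' hred hkey
  have hLprod : ∏ j, x j ^ c π j
      = x i ^ (n - ((i : Fin (n+1)):ℕ)) * ∏ j : Fin n, x (i.succAbove j) ^ c π' j := by
    have hcA : c π i = n - ((i : Fin (n+1)):ℕ) := cA π
    rw [Fin.prod_univ_succAbove (fun j => x j ^ c π j) i, hcA]
    congr 1
    exact Finset.prod_congr rfl fun j _ => by rw [cB π π' hkey j]
  have hRprod : ∏ j : Fin n,
        (if (j:ℕ) < ((i : Fin (n+1)):ℕ) then x j.castSucc else q * x j.succ) ^ c π' j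
      = q ^ S * ∏ j : Fin n, x (i.succAbove j) ^ c π' j := by
    have hterm : ∀ j : Fin n,
        (if (j:ℕ) < ((i : Fin (n+1)):ℕ) then x j.castSucc else q * x j.succ) ^ c π' j
        = (if (j:ℕ) < ((i : Fin (n+1)):ℕ) then 1 else q ^ c π' j) *
            x (i.succAbove j) ^ c π' j := by
      intro j
      by_cases h : (j:ℕ) < ((i : Fin (n+1)):ℕ)
      · rw [if_pos h, if_pos h, one_mul,
          Fin.succAbove_of_castSucc_lt _ _ (by rw [Fin.lt_def, Fin.coe_castSucc]; omega)]
      · rw [if_neg h, if_neg h,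
          Fin.succAbove_of_le_castSucc _ _ (by rw [Fin.le_def, Fin.coe_castSucc]; omega),
          mul_pow]
    rw [Finset.prod_congr rfl fun j _ => hterm j, Finset.prod_mul_distrib]
    congr 1
    rw [Finset.prod_ite, Finset.prod_const_one, one_mul, hS, Finset.prod_pow_eq_pow_sum]
  rw [hLprod, hRprod, hN, pow_add]
  ring
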